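/- Let μ ∈ (0,1) and c₋ = μ²/(2(1−μ)). Define g(x) = ln(1 − μx/(1−μ)) − (1/μ − x)·ln(1 − μ²x/((1−μ)(1−μx))) + c₋x². Then g(x) ≤ 0 for all x ∈ [0, (1−μ)/(2μ)]. -/

import Mathlib

open Real Set

noncomputable def Fg (u : ℝ) : ℝ := (1 - u) * Real.log (1 - u) + u - u ^ 2 / 2

lemma Fg_hasDeriv {u : ℝ} (hu : u < 1) :
    HasDerivAt Fg (-Real.log (1 - u) - u) u := by
  have h1 : (0:ℝ) < 1 - u := by linarith
  have hlog : HasDerivAt (fun v : ℝ => Real.log (1 - v)) (-(1 - u)⁻¹) u := by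
    have := (Real.hasDerivAt_log h1.ne').comp u ((hasDerivAt_id u).const_sub 1)
    simp at this; exact this
  have hmul : HasDerivAt (fun v : ℝ => (1 - v) * Real.log (1 - v))
      ((-1) * Real.log (1 - u) + (1 - u) * (-(1 - u)⁻¹)) u :=
    (((hasDerivAt_id u).const_sub 1)).mul hlog
  have hsq : HasDerivAt (fun v : ℝ => v ^ 2 / 2) u u := by
    have := ((hasDerivAt_pow 2 u).div_const 2)
    simpa using this
  have := (hmul.add (hasDerivAt_id u)).sub hsq
  refine HasDerivAt.congr_deriv this ?_
  rw [mul_neg, mul_inv_cancel₀ h1.ne']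
  ring

lemma Fg_convex : ConvexOn ℝ (Set.Ico (0:ℝ) 1) Fg := by
  have hder : ∀ u ∈ Set.Ioo (0:ℝ) 1, deriv Fg u = -Real.log (1 - u) - u := by
    intro u hu
    exact (Fg_hasDeriv hu.2).deriv
  apply MonotoneOn.convexOn_of_deriv (convex_Ico 0 1)
  · intro u hu
    exact (Fg_hasDeriv hu.2).continuousAt.continuousWithinAt
  · intro u hu
    rw [interior_Ico] at hu
    exact (Fg_hasDeriv hu.2).differentiableAt.differentiableWithinAt
  · rw [interior_Ico]
    intro u hu v hv huv
    rw [hder u hu, hder v hv]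
    -- need : -log(1-u) - u ≤ -log(1-v) - v  i.e. log(1-u) - log(1-v) ≥ v - u
    have h1u : (0:ℝ) < 1 - u := by linarith [hu.2]
    have h1v : (0:ℝ) < 1 - v := by linarith [hv.2]
    have hy : (0:ℝ) < (1 - v) / (1 - u) := div_pos h1v h1u
    have hlog := Real.log_le_sub_one_of_pos hy
    rw [Real.log_div h1v.ne' h1u.ne'] at hlog
    have : (1 - v) / (1 - u) - 1 = -((v - u) / (1 - u)) := by field_simp; ring
    rw [this] at hlog
    have h2 : (v - u) / (1 - u) ≥ v - u := by
      rcases eq_or_lt_of_le huv with rfl | h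
      · simp
      · have : (1:ℝ) - u ≤ 1 := by linarith [hu.1]
        calc v - u = (v - u) / 1 := by ring
          _ ≤ (v - u) / (1 - u) := by
              apply div_le_div_of_nonneg_left (by linarith) h1u (by linarith)
    linarith

lemma Fg_key {mu t : ℝ} (hmu0 : 0 < mu) (hmu1 : mu < 1) (ht0 : 0 ≤ t) (ht1 : t < 1) :
    Fg ((1 - mu) * t) ≤ (1 - mu) * Fg t := by
  have h0 : (0:ℝ) ∈ Set.Ico (0:ℝ) 1 := by constructor <;> norm_num
  have ht : t ∈ Set.Ico (0:ℝ) 1 := ⟨ht0, ht1⟩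
  have := Fg_convex.2 ht h0 (by linarith : (0:ℝ) ≤ 1 - mu) hmu0.le (by ring)
  have hF0 : Fg 0 = 0 := by simp [Fg]
  simpa [hF0] using this

/-- Key analytic estimate for the lower-tail Chernoff bound for geometric random
variables: `g(x) ≤ 0` on `[0, (1-μ)/(2μ)]` with `c₋ = μ²/(2(1-μ))`. -/
theorem geometric_lower_tail_exponent_bound (mu : ℝ) (hmu0 : 0 < mu) (hmu1 : mu < 1) :
    ∀ x ∈ Set.Icc (0 : ℝ) ((1 - mu) / (2 * mu)),
      Real.log (1 - mu * x / (1 - mu))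
        - (1 / mu - x) * Real.log (1 - mu ^ 2 * x / ((1 - mu) * (1 - mu * x)))
        + (mu ^ 2 / (2 * (1 - mu))) * x ^ 2 ≤ 0 := by
  rintro x ⟨hx0, hx1⟩
  have hmu' : (0:ℝ) < 1 - mu := by linarith
  have hmux : mu * x ≤ (1 - mu) / 2 := by
    calc mu * x ≤ mu * ((1 - mu) / (2 * mu)) := by
          exact mul_le_mul_of_nonneg_left hx1 hmu0.le
      _ = (1 - mu) / 2 := by field_simp
  have hmux0 : 0 ≤ mu * x := by positivity
  have h1mux : (0:ℝ) < 1 - mu * x := by nlinarith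
  set t := mu * x / (1 - mu) with ht_def
  have ht0 : 0 ≤ t := by positivity
  have hth : t ≤ 1 / 2 := by
    rw [ht_def, div_le_div_iff₀ hmu' (by norm_num : (0:ℝ) < 2)]
    linarith
  have ht1 : t < 1 := by linarith
  have h1t : (0:ℝ) < 1 - t := by linarith
  have hB : 1 - mu ^ 2 * x / ((1 - mu) * (1 - mu * x)) = (1 - t) / (1 - mu * x) := by
    rw [ht_def]
    field_simp
    ring
  rw [hB, Real.log_div h1t.ne' h1mux.ne']
  have hmuxt : (1 - mu) * t = mu * x := by
    rw [ht_def]; field_simp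
  have key : Fg (mu * x) - (1 - mu) * Fg t ≤ 0 := by
    have := Fg_key hmu0 hmu1 ht0 ht1
    rw [hmuxt] at this
    linarith
  have hid : mu * (Real.log (1 - t)
        - (1 / mu - x) * (Real.log (1 - t) - Real.log (1 - mu * x))
        + mu ^ 2 / (2 * (1 - mu)) * x ^ 2)
      = Fg (mu * x) - (1 - mu) * Fg t := by
    simp only [Fg, ht_def]
    field_simp
    ring
  nlinarith [key, hid, hmu0]
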